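/- Let n ≥ 2 and let g_1,…,g_{n+1} be real constants. Define Q : ℝ^n × ℝ^n → ℝ by Q(x,z) = exp( g_1 e^{z_1} + Σ_{i=1}^{n−1} ( e^{x_i − z_i} + g_{i+1} e^{z_{i+1} − x_i} ) + e^{x_n − z_n} + g_{n+1} e^{−x_n − z_n} ). Then for all x, z ∈ ℝ^n: −(1/2) Σ_{i=1}^{n} ∂²Q/∂x_i² + [ g_1 e^{x_1} + Σ_{i=1}^{n−1} g_{i+1} e^{x_{i+1} − x_i} + g_n g_{n+1} e^{−x_n − x_{n−1}} ] Q = −(1/2) Σ_{i=1}^{n} ∂²Q/∂z_i² + [ (g_1/2)( e^{z_1} + g_1 e^{2 z_1} ) + Σ_{i=1}^{n−1} g_{i+1} e^{z_{i+1} − z_i} + 2 g_{n+1} e^{−2 z_n} ] Q. That is, Q intertwines the quadratic Hamiltonians of the affine B^{(1)}_n and BC^{(1)}_n closed Toda chains. -/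

import Mathlib

open Real

/-- Second partial derivative of `f` in the `i`-th coordinate at `x`. -/
noncomputable def pd2 {k : ℕ} (f : (Fin k → ℝ) → ℝ) (i : Fin k) (x : Fin k → ℝ) : ℝ :=
  deriv (deriv (fun t : ℝ => f (Function.update x i t))) (x i)

/-- The elementary kernel intertwining the affine `B^{(1)}_n` and `BC^{(1)}_n`
closed Toda chains (`n = m + 2 ≥ 2`):
`Q(x,z) = exp( g_1 e^{z_1} + Σ_{i=1}^{n−1} ( e^{x_i − z_i} + g_{i+1} e^{z_{i+1} − x_i} ) + e^{x_n − z_n} + g_{n+1} e^{−x_n − z_n} )`. -/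
noncomputable def Qker (m : ℕ) (g : Fin (m + 3) → ℝ)
    (x z : Fin (m + 2) → ℝ) : ℝ :=
  Real.exp (g 0 * Real.exp (z 0)
    + (∑ i : Fin (m + 1), (Real.exp (x i.castSucc - z i.castSucc)
        + g i.succ.castSucc * Real.exp (z i.succ - x i.castSucc)))
    + Real.exp (x (Fin.last (m + 1)) - z (Fin.last (m + 1)))
    + g (Fin.last (m + 2)) * Real.exp (-x (Fin.last (m + 1)) - z (Fin.last (m + 1))))

lemma exp_split (u v w : ℝ) (h : w = u + v) : Real.exp w = Real.exp u * Real.exp v := by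
  rw [h, Real.exp_add]

lemma sum_if_point {k : ℕ} (T : Fin k → ℝ) (i : Fin k) (v : ℝ) :
    (∑ j, (if j = i then v else T j)) = (∑ j, T j) + (v - T i) := by
  have h1 : (∑ j, (if j = i then v else T j)) = ∑ j, (T j + (if j = i then v - T j else 0)) := by
    apply Finset.sum_congr rfl; intro j _; by_cases h : j = i <;> simp [h]
  rw [h1, Finset.sum_add_distrib, Finset.sum_ite_eq' Finset.univ i]
  simp

lemma deriv2_exp (C P Q : ℝ) (s : ℝ) :
    deriv (deriv (fun t => Real.exp (C + P * Real.exp t + Q * Real.exp (-t)))) s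
      = Real.exp (C + P * Real.exp s + Q * Real.exp (-s)) *
        ((P * Real.exp s - Q * Real.exp (-s))^2 + (P * Real.exp s + Q * Real.exp (-s))) := by
  have hg : ∀ t : ℝ, HasDerivAt (fun t => C + P * Real.exp t + Q * Real.exp (-t))
      (P * Real.exp t - Q * Real.exp (-t)) t := by
    intro t
    have h1 : HasDerivAt (fun t : ℝ => Real.exp t) (Real.exp t) t := Real.hasDerivAt_exp t
    have h2 : HasDerivAt (fun t : ℝ => Real.exp (-t)) (-Real.exp (-t)) t := by
      have := ((hasDerivAt_id t).neg).exp
      simpa using this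
    have : HasDerivAt (fun t => C + P * Real.exp t + Q * Real.exp (-t)) _ t := ((h1.const_mul P).const_add C).add (h2.const_mul Q)
    convert this using 1
    ring
  have hf : deriv (fun t => Real.exp (C + P * Real.exp t + Q * Real.exp (-t)))
      = fun t => Real.exp (C + P * Real.exp t + Q * Real.exp (-t)) * (P * Real.exp t - Q * Real.exp (-t)) := by
    funext t
    exact ((hg t).exp).deriv
  rw [hf]
  have hd : HasDerivAt (fun t => P * Real.exp t - Q * Real.exp (-t)) (P * Real.exp s + Q * Real.exp (-s)) s := by
    have h1 : HasDerivAt (fun t : ℝ => Real.exp t) (Real.exp s) s := Real.hasDerivAt_exp s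
    have h2 : HasDerivAt (fun t : ℝ => Real.exp (-t)) (-Real.exp (-s)) s := by
      have := ((hasDerivAt_id s).neg).exp
      simpa using this
    have : HasDerivAt (fun t => P * Real.exp t - Q * Real.exp (-t)) _ s := (h1.const_mul P).sub (h2.const_mul Q)
    convert this using 1
    ring
  have H : HasDerivAt (fun t => Real.exp (C + P * Real.exp t + Q * Real.exp (-t)) * (P * Real.exp t - Q * Real.exp (-t))) _ s := ((hg s).exp).mul hd
  rw [H.deriv]
  ring

lemma pd2_of_form {k : ℕ} (f : (Fin k → ℝ) → ℝ) (i : Fin k) (x : Fin k → ℝ) (C P Q : ℝ)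
    (h : ∀ t, f (Function.update x i t) = Real.exp (C + P * Real.exp t + Q * Real.exp (-t))) :
    pd2 f i x = f x * ((P * Real.exp (x i) - Q * Real.exp (-(x i)))^2
      + (P * Real.exp (x i) + Q * Real.exp (-(x i)))) := by
  have hx : f x = Real.exp (C + P * Real.exp (x i) + Q * Real.exp (-(x i))) := by
    have := h (x i)
    rwa [Function.update_eq_self] at this
  unfold pd2
  simp only [h]
  rw [deriv2_exp, hx]

lemma exp_neg_mul (u v : ℝ) : Real.exp (-v) * Real.exp u = Real.exp (u - v) := by
  rw [← Real.exp_add]; ring_nf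

lemma exp_mul_neg (u v : ℝ) : Real.exp u * Real.exp (-v) = Real.exp (u - v) := by
  rw [← Real.exp_add]; ring_nf

-- x-coordinate i.castSucc
lemma pd2X (m : ℕ) (g : Fin (m + 3) → ℝ) (x z : Fin (m + 2) → ℝ) (i : Fin (m + 1)) :
    pd2 (fun u => Qker m g u z) i.castSucc x
      = Qker m g x z * ((Real.exp (x i.castSucc - z i.castSucc)
            - g i.succ.castSucc * Real.exp (z i.succ - x i.castSucc))^2
          + (Real.exp (x i.castSucc - z i.castSucc)
            + g i.succ.castSucc * Real.exp (z i.succ - x i.castSucc))) := by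
  have h : ∀ t, (fun u => Qker m g u z) (Function.update x i.castSucc t)
      = Real.exp ((g 0 * Real.exp (z 0)
          + ((∑ j : Fin (m + 1), (Real.exp (x j.castSucc - z j.castSucc)
              + g j.succ.castSucc * Real.exp (z j.succ - x j.castSucc)))
            - (Real.exp (x i.castSucc - z i.castSucc)
              + g i.succ.castSucc * Real.exp (z i.succ - x i.castSucc)))
          + Real.exp (x (Fin.last (m + 1)) - z (Fin.last (m + 1)))
          + g (Fin.last (m + 2)) * Real.exp (-x (Fin.last (m + 1)) - z (Fin.last (m + 1))))
        + Real.exp (-(z i.castSucc)) * Real.exp t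
        + (g i.succ.castSucc * Real.exp (z i.succ)) * Real.exp (-t)) := by
    intro t
    simp only [Qker]
    congr 1
    have hlast : Function.update x i.castSucc t (Fin.last (m + 1)) = x (Fin.last (m + 1)) :=
      Function.update_of_ne (Fin.castSucc_lt_last i).ne' _ _
    have hsum : (∑ j : Fin (m + 1), (Real.exp (Function.update x i.castSucc t j.castSucc - z j.castSucc)
          + g j.succ.castSucc * Real.exp (z j.succ - Function.update x i.castSucc t j.castSucc)))
        = (∑ j : Fin (m + 1), (Real.exp (x j.castSucc - z j.castSucc)
            + g j.succ.castSucc * Real.exp (z j.succ - x j.castSucc)))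
          + ((Real.exp (t - z i.castSucc) + g i.succ.castSucc * Real.exp (z i.succ - t))
            - (Real.exp (x i.castSucc - z i.castSucc)
              + g i.succ.castSucc * Real.exp (z i.succ - x i.castSucc))) := by
      rw [← sum_if_point (fun j => Real.exp (x j.castSucc - z j.castSucc)
          + g j.succ.castSucc * Real.exp (z j.succ - x j.castSucc)) i
          (Real.exp (t - z i.castSucc) + g i.succ.castSucc * Real.exp (z i.succ - t))]
      apply Finset.sum_congr rfl
      intro j _
      by_cases hj : j = i
      · subst hj; simp
      · simp [Function.update_apply, Fin.castSucc_inj, hj]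
    rw [hsum, hlast]
    rw [exp_neg_mul, mul_assoc, exp_mul_neg]
    ring
  rw [pd2_of_form _ _ _ _ _ _ h]
  rw [exp_neg_mul, mul_assoc, exp_mul_neg]

-- x-coordinate last
lemma pd2Xlast (m : ℕ) (g : Fin (m + 3) → ℝ) (x z : Fin (m + 2) → ℝ) :
    pd2 (fun u => Qker m g u z) (Fin.last (m + 1)) x
      = Qker m g x z * ((Real.exp (x (Fin.last (m + 1)) - z (Fin.last (m + 1)))
            - g (Fin.last (m + 2)) * Real.exp (-x (Fin.last (m + 1)) - z (Fin.last (m + 1))))^2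
          + (Real.exp (x (Fin.last (m + 1)) - z (Fin.last (m + 1)))
            + g (Fin.last (m + 2)) * Real.exp (-x (Fin.last (m + 1)) - z (Fin.last (m + 1))))) := by
  have h : ∀ t, (fun u => Qker m g u z) (Function.update x (Fin.last (m + 1)) t)
      = Real.exp ((g 0 * Real.exp (z 0)
          + (∑ j : Fin (m + 1), (Real.exp (x j.castSucc - z j.castSucc)
              + g j.succ.castSucc * Real.exp (z j.succ - x j.castSucc))))
        + Real.exp (-(z (Fin.last (m + 1)))) * Real.exp t
        + (g (Fin.last (m + 2)) * Real.exp (-(z (Fin.last (m + 1))))) * Real.exp (-t)) := by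
    intro t
    simp only [Qker]
    congr 1
    have hup : ∀ j : Fin (m + 1), Function.update x (Fin.last (m + 1)) t j.castSucc = x j.castSucc :=
      fun j => Function.update_of_ne (Fin.castSucc_lt_last j).ne _ _
    simp only [hup, Function.update_self]
    rw [exp_neg_mul, mul_assoc, exp_neg_mul]
  rw [pd2_of_form _ _ _ _ _ _ h]
  rw [exp_neg_mul, mul_assoc, exp_neg_mul]

lemma sum_if_point2 {k : ℕ} (T : Fin k → ℝ) (i₁ i₂ : Fin k) (hne : i₁ ≠ i₂) (v₁ v₂ : ℝ) :
    (∑ j, (if j = i₁ then v₁ else if j = i₂ then v₂ else T j))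
      = (∑ j, T j) + (v₁ - T i₁) + (v₂ - T i₂) := by
  have h1 : (fun j => if j = i₁ then v₁ else if j = i₂ then v₂ else T j)
      = fun j => if j = i₂ then v₂ else (if j = i₁ then v₁ else T j) := by
    funext j
    by_cases ha : j = i₁
    · subst ha; simp [hne]
    · by_cases hb : j = i₂ <;> simp [ha, hb, Ne.symm hne]
  calc (∑ j, (if j = i₁ then v₁ else if j = i₂ then v₂ else T j))
      = ∑ j, (if j = i₂ then v₂ else (if j = i₁ then v₁ else T j)) := by rw [h1]
    _ = (∑ j, (if j = i₁ then v₁ else T j)) + (v₂ - (if i₂ = i₁ then v₁ else T i₂)) :=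
        sum_if_point _ i₂ v₂
    _ = (∑ j, T j) + (v₁ - T i₁) + (v₂ - T i₂) := by
        rw [sum_if_point T i₁ v₁, if_neg (Ne.symm hne)]

-- z-coordinate 0
lemma pd2Z0 (m : ℕ) (g : Fin (m + 3) → ℝ) (x z : Fin (m + 2) → ℝ) :
    pd2 (fun v => Qker m g x v) 0 z
      = Qker m g x z * ((g 0 * Real.exp (z 0) - Real.exp (x 0 - z 0))^2
          + (g 0 * Real.exp (z 0) + Real.exp (x 0 - z 0))) := by
  have h : ∀ t, (fun v => Qker m g x v) (Function.update z 0 t)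
      = Real.exp ((((∑ j : Fin (m + 1), (Real.exp (x j.castSucc - z j.castSucc)
              + g j.succ.castSucc * Real.exp (z j.succ - x j.castSucc)))
            - Real.exp (x 0 - z 0))
          + Real.exp (x (Fin.last (m + 1)) - z (Fin.last (m + 1)))
          + g (Fin.last (m + 2)) * Real.exp (-x (Fin.last (m + 1)) - z (Fin.last (m + 1))))
        + g 0 * Real.exp t
        + Real.exp (x 0) * Real.exp (-t)) := by
    intro t
    simp only [Qker]
    congr 1
    have hlast : Function.update z 0 t (Fin.last (m + 1)) = z (Fin.last (m + 1)) :=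
      Function.update_of_ne (Fin.last_pos).ne' _ _
    have hsum : (∑ j : Fin (m + 1), (Real.exp (x j.castSucc - Function.update z 0 t j.castSucc)
          + g j.succ.castSucc * Real.exp (Function.update z 0 t j.succ - x j.castSucc)))
        = (∑ j : Fin (m + 1), (Real.exp (x j.castSucc - z j.castSucc)
            + g j.succ.castSucc * Real.exp (z j.succ - x j.castSucc)))
          + ((Real.exp (x 0 - t)
              + g (0 : Fin (m+1)).succ.castSucc * Real.exp (z (0 : Fin (m+1)).succ - x 0))
            - (Real.exp (x (0 : Fin (m+1)).castSucc - z (0 : Fin (m+1)).castSucc)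
              + g (0 : Fin (m+1)).succ.castSucc
                * Real.exp (z (0 : Fin (m+1)).succ - x (0 : Fin (m+1)).castSucc))) := by
      rw [← sum_if_point (fun j => Real.exp (x j.castSucc - z j.castSucc)
          + g j.succ.castSucc * Real.exp (z j.succ - x j.castSucc)) 0
          (Real.exp (x 0 - t)
            + g (0 : Fin (m+1)).succ.castSucc * Real.exp (z (0 : Fin (m+1)).succ - x 0))]
      apply Finset.sum_congr rfl
      intro j _
      by_cases hj : j = 0
      · subst hj; simp [Function.update_apply, Fin.succ_ne_zero]
      · simp [Function.update_apply, Fin.castSucc_eq_zero_iff, hj, Fin.succ_ne_zero]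
    rw [hsum, hlast, Function.update_self]
    simp only [Fin.castSucc_zero]
    rw [exp_mul_neg]
    ring
  rw [pd2_of_form _ _ _ _ _ _ h, exp_mul_neg]

-- z-coordinate i.succ.castSucc, i : Fin m
lemma pd2Zmid (m : ℕ) (g : Fin (m + 3) → ℝ) (x z : Fin (m + 2) → ℝ) (i : Fin m) :
    pd2 (fun v => Qker m g x v) i.succ.castSucc z
      = Qker m g x z * ((g i.succ.castSucc.castSucc
            * Real.exp (z i.succ.castSucc - x i.castSucc.castSucc)
            - Real.exp (x i.succ.castSucc - z i.succ.castSucc))^2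
          + (g i.succ.castSucc.castSucc
            * Real.exp (z i.succ.castSucc - x i.castSucc.castSucc)
            + Real.exp (x i.succ.castSucc - z i.succ.castSucc))) := by
  have hne1 : (i.succ : Fin (m+1)) ≠ i.castSucc := (Fin.castSucc_lt_succ (i := i)).ne'
  have h : ∀ t, (fun v => Qker m g x v) (Function.update z i.succ.castSucc t)
      = Real.exp ((g 0 * Real.exp (z 0)
          + ((∑ j : Fin (m + 1), (Real.exp (x j.castSucc - z j.castSucc)
              + g j.succ.castSucc * Real.exp (z j.succ - x j.castSucc)))
            - Real.exp (x i.succ.castSucc - z i.succ.castSucc)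
            - g i.succ.castSucc.castSucc * Real.exp (z (i.castSucc).succ - x i.castSucc.castSucc))
          + Real.exp (x (Fin.last (m + 1)) - z (Fin.last (m + 1)))
          + g (Fin.last (m + 2)) * Real.exp (-x (Fin.last (m + 1)) - z (Fin.last (m + 1))))
        + (g i.succ.castSucc.castSucc * Real.exp (-(x i.castSucc.castSucc))) * Real.exp t
        + Real.exp (x i.succ.castSucc) * Real.exp (-t)) := by
    intro t
    simp only [Qker]
    congr 1
    have h0 : Function.update z i.succ.castSucc t 0 = z 0 := by
      apply Function.update_of_ne
      simp [Fin.castSucc_eq_zero_iff, Fin.succ_ne_zero, eq_comm]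
    have hlast : Function.update z i.succ.castSucc t (Fin.last (m + 1)) = z (Fin.last (m + 1)) :=
      Function.update_of_ne (Fin.castSucc_lt_last i.succ).ne' _ _
    have hsum : (∑ j : Fin (m + 1), (Real.exp (x j.castSucc - Function.update z i.succ.castSucc t j.castSucc)
          + g j.succ.castSucc * Real.exp (Function.update z i.succ.castSucc t j.succ - x j.castSucc)))
        = (∑ j : Fin (m + 1), (Real.exp (x j.castSucc - z j.castSucc)
            + g j.succ.castSucc * Real.exp (z j.succ - x j.castSucc)))
          + ((Real.exp (x i.succ.castSucc - t)
              + g i.succ.succ.castSucc * Real.exp (z i.succ.succ - x i.succ.castSucc))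
            - (Real.exp (x i.succ.castSucc - z i.succ.castSucc)
              + g i.succ.succ.castSucc * Real.exp (z i.succ.succ - x i.succ.castSucc)))
          + ((Real.exp (x i.castSucc.castSucc - z i.castSucc.castSucc)
              + g i.castSucc.succ.castSucc * Real.exp (t - x i.castSucc.castSucc))
            - (Real.exp (x i.castSucc.castSucc - z i.castSucc.castSucc)
              + g i.castSucc.succ.castSucc * Real.exp (z i.castSucc.succ - x i.castSucc.castSucc))) := by
      rw [← sum_if_point2 (fun j => Real.exp (x j.castSucc - z j.castSucc)
          + g j.succ.castSucc * Real.exp (z j.succ - x j.castSucc)) i.succ i.castSucc hne1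
          (Real.exp (x i.succ.castSucc - t)
            + g i.succ.succ.castSucc * Real.exp (z i.succ.succ - x i.succ.castSucc))
          (Real.exp (x i.castSucc.castSucc - z i.castSucc.castSucc)
            + g i.castSucc.succ.castSucc * Real.exp (t - x i.castSucc.castSucc))]
      · apply Finset.sum_congr rfl
        intro j _
        by_cases ha : j = i.succ
        · subst ha
          have : (i.succ : Fin (m+1)).succ ≠ i.succ.castSucc := (Fin.castSucc_lt_succ (i := i.succ)).ne'
          simp [Function.update_apply, Fin.castSucc_inj, this, Fin.succ_castSucc, -Fin.castSucc_succ]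
        · by_cases hb : j = i.castSucc
          · subst hb
            have h2 : (i.castSucc : Fin (m+1)).succ = i.succ.castSucc := Fin.succ_castSucc i
            have h3 : (i.castSucc : Fin (m+1)).castSucc ≠ i.succ.castSucc := by
              simp [Fin.castSucc_inj, -Fin.castSucc_succ]; exact hne1.symm
            simp [Function.update_apply, h2, h3, ha, Fin.succ_castSucc, -Fin.castSucc_succ]
          · have h4 : j.castSucc ≠ i.succ.castSucc := by simp [Fin.castSucc_inj, -Fin.castSucc_succ]; exact ha
            have h5 : j.succ ≠ i.succ.castSucc := by
              rw [← Fin.succ_castSucc]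
              simp [Fin.succ_inj]; exact hb
            simp [Function.update_apply, h4, h5, ha, hb, -Fin.castSucc_succ]
    rw [hsum, h0, hlast]
    rw [exp_mul_neg, mul_assoc, exp_neg_mul]
    simp only [Fin.succ_castSucc]
    ring
  rw [pd2_of_form _ _ _ _ _ _ h, exp_mul_neg, mul_assoc, exp_neg_mul]

-- z-coordinate last
lemma pd2Zlast (m : ℕ) (g : Fin (m + 3) → ℝ) (x z : Fin (m + 2) → ℝ) :
    pd2 (fun v => Qker m g x v) (Fin.last (m+1)) z
      = Qker m g x z * ((g (Fin.last (m+1)).castSucc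
            * Real.exp (z (Fin.last (m+1)) - x (Fin.last m).castSucc)
            - (Real.exp (x (Fin.last (m+1)) - z (Fin.last (m+1)))
              + g (Fin.last (m+2)) * Real.exp (-x (Fin.last (m+1)) - z (Fin.last (m+1)))))^2
          + (g (Fin.last (m+1)).castSucc
            * Real.exp (z (Fin.last (m+1)) - x (Fin.last m).castSucc)
            + (Real.exp (x (Fin.last (m+1)) - z (Fin.last (m+1)))
              + g (Fin.last (m+2)) * Real.exp (-x (Fin.last (m+1)) - z (Fin.last (m+1)))))) := by
  have h : ∀ t, (fun v => Qker m g x v) (Function.update z (Fin.last (m+1)) t)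
      = Real.exp ((g 0 * Real.exp (z 0)
          + ((∑ j : Fin (m + 1), (Real.exp (x j.castSucc - z j.castSucc)
              + g j.succ.castSucc * Real.exp (z j.succ - x j.castSucc)))
            - g (Fin.last m).succ.castSucc
              * Real.exp (z (Fin.last m).succ - x (Fin.last m).castSucc)))
        + (g (Fin.last m).succ.castSucc * Real.exp (-(x (Fin.last m).castSucc))) * Real.exp t
        + (Real.exp (x (Fin.last (m+1)))
            + g (Fin.last (m+2)) * Real.exp (-(x (Fin.last (m+1))))) * Real.exp (-t)) := by
    intro t
    simp only [Qker]
    congr 1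
    have h0 : Function.update z (Fin.last (m+1)) t 0 = z 0 :=
      Function.update_of_ne (Fin.last_pos).ne _ _
    have hsum : (∑ j : Fin (m + 1), (Real.exp (x j.castSucc - Function.update z (Fin.last (m+1)) t j.castSucc)
          + g j.succ.castSucc * Real.exp (Function.update z (Fin.last (m+1)) t j.succ - x j.castSucc)))
        = (∑ j : Fin (m + 1), (Real.exp (x j.castSucc - z j.castSucc)
            + g j.succ.castSucc * Real.exp (z j.succ - x j.castSucc)))
          + ((Real.exp (x (Fin.last m).castSucc - z (Fin.last m).castSucc)
              + g (Fin.last m).succ.castSucc * Real.exp (t - x (Fin.last m).castSucc))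
            - (Real.exp (x (Fin.last m).castSucc - z (Fin.last m).castSucc)
              + g (Fin.last m).succ.castSucc
                * Real.exp (z (Fin.last m).succ - x (Fin.last m).castSucc))) := by
      rw [← sum_if_point (fun j => Real.exp (x j.castSucc - z j.castSucc)
          + g j.succ.castSucc * Real.exp (z j.succ - x j.castSucc)) (Fin.last m)
          (Real.exp (x (Fin.last m).castSucc - z (Fin.last m).castSucc)
            + g (Fin.last m).succ.castSucc * Real.exp (t - x (Fin.last m).castSucc))]
      apply Finset.sum_congr rfl
      intro j _
      by_cases hj : j = Fin.last m
      · subst hj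
        simp [Function.update_apply, Fin.succ_last, (Fin.castSucc_lt_last (Fin.last m)).ne]
      · have h4 : j.castSucc ≠ Fin.last (m+1) := (Fin.castSucc_lt_last j).ne
        have h5 : j.succ ≠ Fin.last (m+1) := by
          rw [← Fin.succ_last]
          simp [Fin.succ_inj]; exact hj
        simp [Function.update_apply, h4, h5, hj]
    rw [hsum, h0, Function.update_self]
    rw [mul_assoc, exp_neg_mul, add_mul, exp_mul_neg, mul_assoc, exp_mul_neg]
    ring
  rw [pd2_of_form _ _ _ _ _ _ h, mul_assoc, exp_neg_mul,
    add_mul, exp_mul_neg, mul_assoc, exp_mul_neg, Fin.succ_last]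


lemma tele {m : ℕ} (h : Fin (m + 2) → ℝ) :
    (∑ j : Fin (m + 1), h j.castSucc) - (∑ j : Fin (m + 1), h j.succ)
      = h 0 - h (Fin.last (m + 1)) := by
  have h1 := Fin.sum_univ_succ h
  have h2 := Fin.sum_univ_castSucc h
  linarith

lemma key (m : ℕ) (a : Fin (m + 2) → ℝ) (b : Fin (m + 1) → ℝ) (c d : ℝ) :
    -(1/2) * ((∑ i : Fin (m + 1), ((a i.castSucc - b i)^2 + (a i.castSucc + b i)))
        + ((a (Fin.last (m + 1)) - c)^2 + (a (Fin.last (m + 1)) + c)))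
      + (d * a 0 + (∑ i : Fin (m + 1), b i * a i.succ) + b (Fin.last m) * c)
    = -(1/2) * (((d - a 0)^2 + (d + a 0))
        + (∑ i : Fin m, ((b i.castSucc - a i.succ.castSucc)^2 + (b i.castSucc + a i.succ.castSucc)))
        + ((b (Fin.last m) - (a (Fin.last (m + 1)) + c))^2
            + (b (Fin.last m) + (a (Fin.last (m + 1)) + c))))
      + ((d/2 + d^2/2) + (∑ i : Fin (m + 1), a i.castSucc * b i)
          + 2 * (a (Fin.last (m + 1)) * c)) := by
  have hM : (∑ i : Fin m, ((b i.castSucc - a i.succ.castSucc)^2 + (b i.castSucc + a i.succ.castSucc)))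
      = (∑ j : Fin (m + 1), ((b j - a j.succ)^2 + (b j + a j.succ)))
        - ((b (Fin.last m) - a (Fin.last (m + 1)))^2 + (b (Fin.last m) + a (Fin.last (m + 1)))) := by
    rw [Fin.sum_univ_castSucc (f := fun j : Fin (m+1) => ((b j - a j.succ)^2 + (b j + a j.succ)))]
    simp only [Fin.succ_castSucc, Fin.succ_last]
    ring
  have htele := tele (fun j => (a j)^2 + a j)
  have E : (∑ i : Fin (m + 1), ((a i.castSucc - b i)^2 + (a i.castSucc + b i)))
      - (∑ j : Fin (m + 1), ((b j - a j.succ)^2 + (b j + a j.succ)))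
      + 2 * (∑ i : Fin (m + 1), a i.castSucc * b i)
      - 2 * (∑ i : Fin (m + 1), b i * a i.succ)
      = (a 0)^2 + a 0 - ((a (Fin.last (m + 1)))^2 + a (Fin.last (m + 1))) := by
    calc (∑ i : Fin (m + 1), ((a i.castSucc - b i)^2 + (a i.castSucc + b i)))
          - (∑ j : Fin (m + 1), ((b j - a j.succ)^2 + (b j + a j.succ)))
          + 2 * (∑ i : Fin (m + 1), a i.castSucc * b i)
          - 2 * (∑ i : Fin (m + 1), b i * a i.succ)
        = ∑ j : Fin (m + 1), (((a j.castSucc - b j)^2 + (a j.castSucc + b j))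
            - ((b j - a j.succ)^2 + (b j + a j.succ))
            + 2 * (a j.castSucc * b j) - 2 * (b j * a j.succ)) := by
          simp only [Finset.sum_sub_distrib, Finset.sum_add_distrib, ← Finset.mul_sum]
      _ = ∑ j : Fin (m + 1), (((a j.castSucc)^2 + a j.castSucc) - ((a j.succ)^2 + a j.succ)) :=
          Finset.sum_congr rfl fun j _ => by ring
      _ = (a 0)^2 + a 0 - ((a (Fin.last (m + 1)))^2 + a (Fin.last (m + 1))) := by
          rw [Finset.sum_sub_distrib]; exact htele
  rw [hM]
  linear_combination (-(1:ℝ)/2) * E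

/-- The kernel `Q` intertwines the quadratic Hamiltonians of the affine
`B^{(1)}_n` and `BC^{(1)}_n` closed Toda chains, `n = m + 2 ≥ 2`. -/
theorem B1_BC1_intertwining (m : ℕ) (g : Fin (m + 3) → ℝ)
    (x z : Fin (m + 2) → ℝ) :
    -(1/2) * (∑ i : Fin (m + 2), pd2 (fun u => Qker m g u z) i x)
      + (g 0 * Real.exp (x 0)
          + (∑ i : Fin (m + 1), g i.succ.castSucc * Real.exp (x i.succ - x i.castSucc))
          + g (Fin.last (m + 1)).castSucc * g (Fin.last (m + 2))
              * Real.exp (-x (Fin.last (m + 1)) - x (Fin.last m).castSucc)) * Qker m g x z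
    = -(1/2) * (∑ i : Fin (m + 2), pd2 (fun v => Qker m g x v) i z)
      + ((g 0 / 2) * (Real.exp (z 0) + g 0 * Real.exp (2 * z 0))
          + (∑ i : Fin (m + 1), g i.succ.castSucc * Real.exp (z i.succ - z i.castSucc))
          + 2 * g (Fin.last (m + 2))
              * Real.exp (-(2 * z (Fin.last (m + 1))))) * Qker m g x z := by
  have hp1 : g 0 * Real.exp (x 0) = (g 0 * Real.exp (z 0)) * Real.exp (x 0 - z 0) := by
    rw [exp_split (z 0) (x 0 - z 0) (x 0) (by ring)]; ring
  have hp2 : ∀ i : Fin (m + 1), g i.succ.castSucc * Real.exp (x i.succ - x i.castSucc)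
      = (g i.succ.castSucc * Real.exp (z i.succ - x i.castSucc)) * Real.exp (x i.succ - z i.succ) :=
    fun i => by
      rw [exp_split (z i.succ - x i.castSucc) (x i.succ - z i.succ) (x i.succ - x i.castSucc)
        (by ring)]; ring
  have hp3 : g (Fin.last (m + 1)).castSucc * g (Fin.last (m + 2))
        * Real.exp (-x (Fin.last (m + 1)) - x (Fin.last m).castSucc)
      = (g (Fin.last (m + 1)).castSucc
          * Real.exp (z (Fin.last (m + 1)) - x (Fin.last m).castSucc))
        * (g (Fin.last (m + 2))
          * Real.exp (-x (Fin.last (m + 1)) - z (Fin.last (m + 1)))) := by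
    rw [exp_split (z (Fin.last (m + 1)) - x (Fin.last m).castSucc)
      (-x (Fin.last (m + 1)) - z (Fin.last (m + 1)))
      (-x (Fin.last (m + 1)) - x (Fin.last m).castSucc) (by ring)]; ring
  have hp4 : (g 0 / 2) * (Real.exp (z 0) + g 0 * Real.exp (2 * z 0))
      = (g 0 * Real.exp (z 0)) / 2 + (g 0 * Real.exp (z 0))^2 / 2 := by
    rw [exp_split (z 0) (z 0) (2 * z 0) (by ring)]; ring
  have hp5 : ∀ i : Fin (m + 1), g i.succ.castSucc * Real.exp (z i.succ - z i.castSucc)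
      = Real.exp (x i.castSucc - z i.castSucc)
        * (g i.succ.castSucc * Real.exp (z i.succ - x i.castSucc)) :=
    fun i => by
      rw [exp_split (x i.castSucc - z i.castSucc) (z i.succ - x i.castSucc)
        (z i.succ - z i.castSucc) (by ring)]; ring
  have hp6 : 2 * g (Fin.last (m + 2)) * Real.exp (-(2 * z (Fin.last (m + 1))))
      = 2 * (Real.exp (x (Fin.last (m + 1)) - z (Fin.last (m + 1)))
          * (g (Fin.last (m + 2))
            * Real.exp (-x (Fin.last (m + 1)) - z (Fin.last (m + 1))))) := by
    rw [exp_split (x (Fin.last (m + 1)) - z (Fin.last (m + 1)))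
      (-x (Fin.last (m + 1)) - z (Fin.last (m + 1)))
      (-(2 * z (Fin.last (m + 1)))) (by ring)]; ring
  rw [Fin.sum_univ_castSucc (f := fun i : Fin (m + 2) => pd2 (fun u => Qker m g u z) i x)]
  rw [Fin.sum_univ_succ (f := fun i : Fin (m + 2) => pd2 (fun v => Qker m g x v) i z)]
  rw [Fin.sum_univ_castSucc (f := fun i : Fin (m + 1) => pd2 (fun v => Qker m g x v) i.succ z)]
  simp only [Fin.succ_castSucc, Fin.succ_last]
  simp only [pd2X, pd2Xlast, pd2Z0, pd2Zmid, pd2Zlast]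
  rw [← Finset.mul_sum, ← Finset.mul_sum]
  rw [hp1, hp3, hp4]
  simp only [hp2, hp5]
  rw [hp6]
  have K := key m (fun j => Real.exp (x j - z j))
    (fun k : Fin (m + 1) => g k.succ.castSucc * Real.exp (z k.succ - x k.castSucc))
    (g (Fin.last (m + 2)) * Real.exp (-x (Fin.last (m + 1)) - z (Fin.last (m + 1))))
    (g 0 * Real.exp (z 0))
  simp only [Fin.succ_castSucc, Fin.succ_last] at K
  linear_combination Qker m g x z * K
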